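/- Let ζ_j be a non-real nonzero complex number (ζ_j² ≠ ζ̄_j²), let ⟨y| = (y₁, y₂) be a nonzero complex row vector with |y⟩ = ⟨y|† its conjugate transpose, suppose α⁻¹ := ⟨y| diag(ζ_j, ζ̄_j) |y⟩ ≠ 0, and define |z⟩ = ((ζ_j² − ζ̄_j²)/2) · diag(α, ᾱ) · |y⟩ and B = |z⟩⟨y|. Then, with D(ζ) := I + B/(ζ − ζ_j) − σ₃Bσ₃/(ζ + ζ_j) and E(ζ) := I + B†/(ζ − ζ̄_j) − σ₃B†σ₃/(ζ + ζ̄_j), one has ⟨y| E(ζ_j) = 0, i.e. ⟨y| + (⟨y|y⟩/(ζ_j − ζ̄_j))⟨z| − (⟨y|σ₃|y⟩/(ζ_j + ζ̄_j))⟨z|σ₃ = 0. -/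

import Mathlib

open Matrix Filter Topology ComplexConjugate

noncomputable section

attribute [local instance] Matrix.normedAddCommGroup Matrix.normedSpace

abbrev M2 := Matrix (Fin 2) (Fin 2) ℂ

def σ3 : M2 := !![1, 0; 0, -1]

def σ2 : M2 := !![0, -Complex.I; Complex.I, 0]

/-- A 2×2 matrix is diagonal if its off-diagonal entries vanish. -/
def IsDiag2 (A : M2) : Prop := A 0 1 = 0 ∧ A 1 0 = 0

/-- A 2×2 matrix is off-diagonal if its diagonal entries vanish. -/
def IsOffDiag2 (A : M2) : Prop := A 0 0 = 0 ∧ A 1 1 = 0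

/-- `⟨y| D⁻¹(ζⱼ) = 0` for the rank-one dressing factor, i.e.
`⟨y| + (⟨y|y⟩/(ζⱼ−ζ̄ⱼ))⟨z| − (⟨y|σ₃|y⟩/(ζⱼ+ζ̄ⱼ))⟨z|σ₃ = 0`. -/
theorem stmt6
    (zj : ℂ) (hzj : zj ^ 2 ≠ (conj zj) ^ 2)
    (y : Fin 2 → ℂ) (hy : y ≠ 0)
    (α : ℂ) (hα : α * (zj * y 0 * conj (y 0) + conj zj * y 1 * conj (y 1)) = 1)
    (z : Fin 2 → ℂ)
    (hz0 : z 0 = (zj ^ 2 - (conj zj) ^ 2) / 2 * α * conj (y 0))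
    (hz1 : z 1 = (zj ^ 2 - (conj zj) ^ 2) / 2 * conj α * conj (y 1))
    (B : M2) (hB : B = Matrix.vecMulVec z y)
    (E : ℂ → M2)
    (hE : ∀ w : ℂ, E w = 1 + (w - conj zj)⁻¹ • Bᴴ - (w + conj zj)⁻¹ • (σ3 * Bᴴ * σ3))
    : Matrix.vecMul y (E zj) = 0 ∧
      y + ((y 0 * conj (y 0) + y 1 * conj (y 1)) / (zj - conj zj)) • (fun k => conj (z k))
        - ((y 0 * conj (y 0) - y 1 * conj (y 1)) / (zj + conj zj)) •
            Matrix.vecMul (fun k => conj (z k)) σ3 = 0 := by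
  have hd : zj - conj zj ≠ 0 := by
    intro h
    exact hzj (by linear_combination (zj + conj zj) * h)
  have hs : zj + conj zj ≠ 0 := by
    intro h
    exact hzj (by linear_combination (zj - conj zj) * h)
  have hα' : conj α * (conj zj * y 0 * conj (y 0) + zj * y 1 * conj (y 1)) = 1 := by
    have h := congrArg conj hα
    simp only [map_add, _root_.map_mul, RingHom.map_one, Complex.conj_conj] at h
    linear_combination h
  have hc0 : conj (z 0) = ((conj zj) ^ 2 - zj ^ 2) / 2 * conj α * y 0 := by
    rw [hz0]
    simp [_root_.map_mul, map_div₀, map_sub, map_pow, Complex.conj_ofNat]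
  have hc1 : conj (z 1) = ((conj zj) ^ 2 - zj ^ 2) / 2 * α * y 1 := by
    rw [hz1]
    simp [_root_.map_mul, map_div₀, map_sub, map_pow, Complex.conj_ofNat]
  set N := y 0 * conj (y 0) + y 1 * conj (y 1) with hN
  set S := y 0 * conj (y 0) - y 1 * conj (y 1) with hS
  have key0 : y 0 + N / (zj - conj zj) * conj (z 0) - S / (zj + conj zj) * conj (z 0) = 0 := by
    rw [hc0, hN, hS]
    field_simp
    linear_combination -2 * (zj ^ 2 - (conj zj) ^ 2) * y 0 * hα'
  have key1 : y 1 + N / (zj - conj zj) * conj (z 1) + S / (zj + conj zj) * conj (z 1) = 0 := by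
    rw [hc1, hN, hS]
    field_simp
    linear_combination -2 * (zj ^ 2 - (conj zj) ^ 2) * y 1 * hα
  constructor
  · funext k
    rw [hE, hB]
    fin_cases k <;>
      simp [Matrix.vecMul, dotProduct, Fin.sum_univ_two, Matrix.mul_apply,
        Matrix.conjTranspose_apply, Matrix.vecMulVec_apply, σ3, Matrix.one_apply,
        Complex.star_def, _root_.map_mul]
    · linear_combination key0
    · linear_combination key1
  · funext k
    fin_cases k <;>
      simp [Matrix.vecMul, dotProduct, Fin.sum_univ_two, σ3, Matrix.vecHead, Matrix.vecTail]
    · linear_combination key0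
    · linear_combination key1
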